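/- Let X be a real normed space. Suppose x₁, x₂, x₃ ∈ X satisfy ‖x₁ − x₂‖ ≤ ‖x₂ − x₃‖ ≤ ‖x₁ − x₃‖ = 1 and ‖x₁ − x₂‖ ≤ 1/3, and suppose y₁, y₂, y₃ ∈ X satisfy ‖y₁ − y₂‖ ≤ ‖y₂ − y₃‖ ≤ ‖y₁ − y₃‖ = 1 and ‖y₁ − y₂‖ ≤ 1/3. Then d_H({(x₁ + x₂)/2, x₃}, {(y₁ + y₂)/2, y₃}) ≤ 3·d_H({x₁, x₂, x₃}, {y₁, y₂, y₃}). -/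

import Mathlib

private lemma mid_sub_mid {X : Type*} [NormedAddCommGroup X] [NormedSpace ℝ X]
    (a b c d : X) :
    ‖(2:ℝ)⁻¹ • (a + b) - (2:ℝ)⁻¹ • (c + d)‖ ≤ (‖a - c‖ + ‖b - d‖) / 2 := by
  have h : (2:ℝ)⁻¹ • (a + b) - (2:ℝ)⁻¹ • (c + d) = (2:ℝ)⁻¹ • ((a - c) + (b - d)) := by
    module
  rw [h, norm_smul]
  have h2 := norm_add_le (a - c) (b - d)
  have h3 : ‖(2:ℝ)⁻¹‖ = 2⁻¹ := by rw [Real.norm_eq_abs]; norm_num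
  rw [h3]
  linarith

private lemma mid_sub_pt {X : Type*} [NormedAddCommGroup X] [NormedSpace ℝ X]
    (a b c : X) :
    ‖(2:ℝ)⁻¹ • (a + b) - c‖ ≤ (‖a - c‖ + ‖b - c‖) / 2 := by
  have h : (2:ℝ)⁻¹ • (a + b) - c = (2:ℝ)⁻¹ • ((a - c) + (b - c)) := by module
  rw [h, norm_smul]
  have h2 := norm_add_le (a - c) (b - c)
  have h3 : ‖(2:ℝ)⁻¹‖ = 2⁻¹ := by rw [Real.norm_eq_abs]; norm_num
  rw [h3]
  linarith

set_option maxHeartbeats 2000000 in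
/-- The map sending a thin triple `{x₁,x₂,x₃}` to `{(x₁+x₂)/2, x₃}` is `3`-Lipschitz
on thin sets. -/
theorem stmt_5 {X : Type*} [NormedAddCommGroup X] [NormedSpace ℝ X]
    (x₁ x₂ x₃ y₁ y₂ y₃ : X)
    (hx12 : ‖x₁ - x₂‖ ≤ ‖x₂ - x₃‖) (hx23 : ‖x₂ - x₃‖ ≤ ‖x₁ - x₃‖)
    (hx13 : ‖x₁ - x₃‖ = 1) (hxthin : ‖x₁ - x₂‖ ≤ 1 / 3)
    (hy12 : ‖y₁ - y₂‖ ≤ ‖y₂ - y₃‖) (hy23 : ‖y₂ - y₃‖ ≤ ‖y₁ - y₃‖)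
    (hy13 : ‖y₁ - y₃‖ = 1) (hythin : ‖y₁ - y₂‖ ≤ 1 / 3) :
    Metric.hausdorffDist ({(2 : ℝ)⁻¹ • (x₁ + x₂), x₃} : Set X)
        ({(2 : ℝ)⁻¹ • (y₁ + y₂), y₃} : Set X) ≤
      3 * Metric.hausdorffDist ({x₁, x₂, x₃} : Set X) ({y₁, y₂, y₃} : Set X) := by
  set mx := (2:ℝ)⁻¹ • (x₁ + x₂) with hmxdef
  set my := (2:ℝ)⁻¹ • (y₁ + y₂) with hmydef
  set r := Metric.hausdorffDist ({x₁,x₂,x₃} : Set X) ({y₁,y₂,y₃} : Set X) with hrdef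
  have hr0 : 0 ≤ r := Metric.hausdorffDist_nonneg
  have hAne : ({x₁,x₂,x₃} : Set X).Nonempty := ⟨x₁, by simp⟩
  have hBne : ({y₁,y₂,y₃} : Set X).Nonempty := ⟨y₁, by simp⟩
  have hAb : Bornology.IsBounded ({x₁,x₂,x₃} : Set X) := (Set.toFinite _).isBounded
  have hBb : Bornology.IsBounded ({y₁,y₂,y₃} : Set X) := (Set.toFinite _).isBounded
  have hfin : EMetric.hausdorffEdist ({x₁,x₂,x₃} : Set X) ({y₁,y₂,y₃} : Set X) ≠ ⊤ :=
    Metric.hausdorffEdist_ne_top_of_nonempty_of_bounded hAne hBne hAb hBb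
  have hfin' : EMetric.hausdorffEdist ({y₁,y₂,y₃} : Set X) ({x₁,x₂,x₃} : Set X) ≠ ⊤ := by
    exact Metric.hausdorffEdist_ne_top_of_nonempty_of_bounded hBne hAne hBb hAb
  have nearx : ∀ x ∈ ({x₁,x₂,x₃} : Set X), ‖x - y₁‖ ≤ r ∨ ‖x - y₂‖ ≤ r ∨ ‖x - y₃‖ ≤ r := by
    intro x hx
    have hc : IsCompact ({y₁,y₂,y₃} : Set X) := (Set.toFinite _).isCompact
    obtain ⟨y, hyB, hyd⟩ := hc.exists_infDist_eq_dist hBne x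
    have hle : dist x y ≤ r := by
      rw [← hyd]
      exact Metric.infDist_le_hausdorffDist_of_mem hx hfin
    rw [dist_eq_norm] at hle
    simp only [Set.mem_insert_iff, Set.mem_singleton_iff] at hyB
    rcases hyB with rfl | rfl | rfl
    · exact Or.inl hle
    · exact Or.inr (Or.inl hle)
    · exact Or.inr (Or.inr hle)
  have neary : ∀ y ∈ ({y₁,y₂,y₃} : Set X), ‖y - x₁‖ ≤ r ∨ ‖y - x₂‖ ≤ r ∨ ‖y - x₃‖ ≤ r := by
    intro y hy
    have hc : IsCompact ({x₁,x₂,x₃} : Set X) := (Set.toFinite _).isCompact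
    obtain ⟨x, hxA, hxd⟩ := hc.exists_infDist_eq_dist hAne y
    have hle : dist y x ≤ r := by
      rw [← hxd, hrdef, Metric.hausdorffDist_comm]
      exact Metric.infDist_le_hausdorffDist_of_mem hy hfin'
    rw [dist_eq_norm] at hle
    simp only [Set.mem_insert_iff, Set.mem_singleton_iff] at hxA
    rcases hxA with rfl | rfl | rfl
    · exact Or.inl hle
    · exact Or.inr (Or.inl hle)
    · exact Or.inr (Or.inr hle)
  have hx1 := nearx x₁ (by simp)
  have hx2 := nearx x₂ (by simp)
  have hx3 := nearx x₃ (by simp)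
  have hy1 := neary y₁ (by simp)
  have hy2 := neary y₂ (by simp)
  have hy3 := neary y₃ (by simp)
  have tri : ∀ a b c : X, ‖a - c‖ ≤ ‖a - b‖ + ‖b - c‖ := fun a b c => by
    simpa [dist_eq_norm] using dist_triangle a b c
  have sym : ∀ a b : X, ‖a - b‖ = ‖b - a‖ := fun a b => norm_sub_rev a b
  have hx23lb : 2/3 ≤ ‖x₂ - x₃‖ := by
    have := tri x₁ x₂ x₃; linarith
  have hy23lb : 2/3 ≤ ‖y₂ - y₃‖ := by
    have := tri y₁ y₂ y₃; linarith
  have hmxx1 : ‖mx - x₁‖ ≤ 1/6 := by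
    have h := mid_sub_pt x₁ x₂ x₁
    rw [sub_self, norm_zero, norm_sub_rev x₂ x₁] at h
    rw [hmxdef]; linarith
  have hmxx2 : ‖mx - x₂‖ ≤ 1/6 := by
    have h := mid_sub_pt x₁ x₂ x₂
    rw [sub_self, norm_zero] at h
    rw [hmxdef]; linarith
  have hmyy1 : ‖my - y₁‖ ≤ 1/6 := by
    have h := mid_sub_pt y₁ y₂ y₁
    rw [sub_self, norm_zero, norm_sub_rev y₂ y₁] at h
    rw [hmydef]; linarith
  have hmyy2 : ‖my - y₂‖ ≤ 1/6 := by
    have h := mid_sub_pt y₁ y₂ y₂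
    rw [sub_self, norm_zero] at h
    rw [hmydef]; linarith
  rcases lt_or_ge r (1/6) with hrsmall | hrbig
  · -- small case: r < 1/6
    rcases hx3 with h3 | h3 | h3
    · -- x₃ close to y₁ : crossed matching
      have hx1y3 : ‖x₁ - y₃‖ ≤ r ∧ ‖x₂ - y₃‖ ≤ r := by
        have hx1' : ‖x₁ - y₂‖ ≤ r ∨ ‖x₁ - y₃‖ ≤ r := by
          rcases hx1 with h | h | h
          · exact absurd h (by push_neg; linarith [tri x₁ y₁ x₃, sym y₁ x₃])
          · exact Or.inl h
          · exact Or.inr h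
        have hx2' : ‖x₂ - y₂‖ ≤ r ∨ ‖x₂ - y₃‖ ≤ r := by
          rcases hx2 with h | h | h
          · exact absurd h (by push_neg; linarith [tri x₂ y₁ x₃, sym y₁ x₃])
          · exact Or.inl h
          · exact Or.inr h
        have hy3' : ‖y₃ - x₁‖ ≤ r ∨ ‖y₃ - x₂‖ ≤ r := by
          rcases hy3 with h | h | h
          · exact Or.inl h
          · exact Or.inr h
          · exact absurd h (by push_neg; linarith [tri y₃ x₃ y₁, sym y₃ y₁])
        rcases hx1' with h1 | h1 <;> rcases hx2' with h2 | h2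
        · exfalso
          rcases hy3' with h4 | h4
          · linarith [tri y₂ x₁ y₃, sym y₂ x₁, sym x₁ y₃]
          · linarith [tri y₂ x₂ y₃, sym y₂ x₂, sym x₂ y₃]
        · exfalso
          linarith [tri y₂ x₁ y₃, tri x₁ x₂ y₃, sym y₂ x₁]
        · exfalso
          linarith [tri y₂ x₂ y₃, tri x₂ x₁ y₃, sym y₂ x₂, sym x₂ x₁]
        · exact ⟨h1, h2⟩
      obtain ⟨h13, h23⟩ := hx1y3
      have hy2x3 : ‖y₂ - x₃‖ ≤ r := by
        rcases hy2 with h | h | h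
        · exact absurd h (by push_neg; linarith [tri y₂ x₁ y₃])
        · exact absurd h (by push_neg; linarith [tri y₂ x₂ y₃])
        · exact h
      have hmxy3 : ‖mx - y₃‖ ≤ r := by
        have h := mid_sub_pt x₁ x₂ y₃
        rw [hmxdef]; linarith
      have hmyx3 : ‖my - x₃‖ ≤ r := by
        have h := mid_sub_pt y₁ y₂ x₃
        have h3' : ‖y₁ - x₃‖ ≤ r := by rw [norm_sub_rev]; exact h3
        rw [hmydef]; linarith
      apply Metric.hausdorffDist_le_of_mem_dist (by linarith)
      · intro z hz
        simp only [Set.mem_insert_iff, Set.mem_singleton_iff] at hz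
        rcases hz with h | h <;> rw [h]
        · exact ⟨y₃, Set.mem_insert_of_mem _ rfl, by rw [dist_eq_norm]; linarith⟩
        · refine ⟨my, Set.mem_insert _ _, ?_⟩
          rw [dist_eq_norm, norm_sub_rev]; linarith
      · intro z hz
        simp only [Set.mem_insert_iff, Set.mem_singleton_iff] at hz
        rcases hz with h | h <;> rw [h]
        · refine ⟨x₃, Set.mem_insert_of_mem _ rfl, ?_⟩
          rw [dist_eq_norm]; linarith
        · refine ⟨mx, Set.mem_insert _ _, ?_⟩
          rw [dist_eq_norm, norm_sub_rev]; linarith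
    · -- x₃ close to y₂ : crossed matching
      have hx1y3 : ‖x₁ - y₃‖ ≤ r ∧ ‖x₂ - y₃‖ ≤ r := by
        have hx1' : ‖x₁ - y₁‖ ≤ r ∨ ‖x₁ - y₃‖ ≤ r := by
          rcases hx1 with h | h | h
          · exact Or.inl h
          · exact absurd h (by push_neg; linarith [tri x₁ y₂ x₃, sym y₂ x₃])
          · exact Or.inr h
        have hx2' : ‖x₂ - y₁‖ ≤ r ∨ ‖x₂ - y₃‖ ≤ r := by
          rcases hx2 with h | h | h
          · exact Or.inl h
          · exact absurd h (by push_neg; linarith [tri x₂ y₂ x₃, sym y₂ x₃])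
          · exact Or.inr h
        have hy3' : ‖y₃ - x₁‖ ≤ r ∨ ‖y₃ - x₂‖ ≤ r := by
          rcases hy3 with h | h | h
          · exact Or.inl h
          · exact Or.inr h
          · exact absurd h (by push_neg; linarith [tri y₃ x₃ y₂, sym y₃ y₂])
        rcases hx1' with h1 | h1 <;> rcases hx2' with h2 | h2
        · exfalso
          rcases hy3' with h4 | h4
          · linarith [tri y₁ x₁ y₃, sym y₁ x₁, sym x₁ y₃]
          · linarith [tri y₁ x₂ y₃, sym y₁ x₂, sym x₂ y₃]
        · exfalso
          linarith [tri y₁ x₁ y₃, tri x₁ x₂ y₃, sym y₁ x₁]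
        · exfalso
          linarith [tri y₁ x₂ y₃, tri x₂ x₁ y₃, sym y₁ x₂, sym x₂ x₁]
        · exact ⟨h1, h2⟩
      obtain ⟨h13, h23⟩ := hx1y3
      have hy1x3 : ‖y₁ - x₃‖ ≤ r := by
        rcases hy1 with h | h | h
        · exact absurd h (by push_neg; linarith [tri y₁ x₁ y₃])
        · exact absurd h (by push_neg; linarith [tri y₁ x₂ y₃])
        · exact h
      have hmxy3 : ‖mx - y₃‖ ≤ r := by
        have h := mid_sub_pt x₁ x₂ y₃
        rw [hmxdef]; linarith
      have hmyx3 : ‖my - x₃‖ ≤ r := by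
        have h := mid_sub_pt y₁ y₂ x₃
        have h3' : ‖y₂ - x₃‖ ≤ r := by rw [norm_sub_rev]; exact h3
        rw [hmydef]; linarith
      apply Metric.hausdorffDist_le_of_mem_dist (by linarith)
      · intro z hz
        simp only [Set.mem_insert_iff, Set.mem_singleton_iff] at hz
        rcases hz with h | h <;> rw [h]
        · exact ⟨y₃, Set.mem_insert_of_mem _ rfl, by rw [dist_eq_norm]; linarith⟩
        · refine ⟨my, Set.mem_insert _ _, ?_⟩
          rw [dist_eq_norm, norm_sub_rev]; linarith
      · intro z hz
        simp only [Set.mem_insert_iff, Set.mem_singleton_iff] at hz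
        rcases hz with h | h <;> rw [h]
        · refine ⟨x₃, Set.mem_insert_of_mem _ rfl, ?_⟩
          rw [dist_eq_norm]; linarith
        · refine ⟨mx, Set.mem_insert _ _, ?_⟩
          rw [dist_eq_norm, norm_sub_rev]; linarith
    · -- x₃ close to y₃ : straight matching
      have hx1' : ‖x₁ - y₁‖ ≤ r ∨ ‖x₁ - y₂‖ ≤ r := by
        rcases hx1 with h | h | h
        · exact Or.inl h
        · exact Or.inr h
        · exact absurd h (by push_neg; linarith [tri x₁ y₃ x₃, sym y₃ x₃])
      have hx2' : ‖x₂ - y₁‖ ≤ r ∨ ‖x₂ - y₂‖ ≤ r := by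
        rcases hx2 with h | h | h
        · exact Or.inl h
        · exact Or.inr h
        · exact absurd h (by push_neg; linarith [tri x₂ y₃ x₃, sym y₃ x₃])
      have hy1' : ‖y₁ - x₁‖ ≤ r ∨ ‖y₁ - x₂‖ ≤ r := by
        rcases hy1 with h | h | h
        · exact Or.inl h
        · exact Or.inr h
        · exact absurd h (by push_neg; linarith [tri y₁ x₃ y₃])
      have hy2' : ‖y₂ - x₁‖ ≤ r ∨ ‖y₂ - x₂‖ ≤ r := by
        rcases hy2 with h | h | h
        · exact Or.inl h
        · exact Or.inr h
        · exact absurd h (by push_neg; linarith [tri y₂ x₃ y₃])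
      have hpair : (‖x₁ - y₁‖ ≤ r ∧ ‖x₂ - y₂‖ ≤ r) ∨ (‖x₁ - y₂‖ ≤ r ∧ ‖x₂ - y₁‖ ≤ r) := by
        rcases hx1' with h1 | h1 <;> rcases hx2' with h2 | h2
        · rcases hy2' with h4 | h4
          · exact Or.inr ⟨by rwa [norm_sub_rev] at h4, h2⟩
          · exact Or.inl ⟨h1, by rwa [norm_sub_rev] at h4⟩
        · exact Or.inl ⟨h1, h2⟩
        · exact Or.inr ⟨h1, h2⟩
        · rcases hy1' with h4 | h4
          · exact Or.inl ⟨by rwa [norm_sub_rev] at h4, h2⟩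
          · exact Or.inr ⟨h1, by rwa [norm_sub_rev] at h4⟩
      have hm : ‖mx - my‖ ≤ r := by
        rcases hpair with ⟨h1, h2⟩ | ⟨h1, h2⟩
        · have h := mid_sub_mid x₁ x₂ y₁ y₂
          rw [hmxdef, hmydef]; linarith
        · have h := mid_sub_mid x₁ x₂ y₂ y₁
          rw [add_comm y₂ y₁] at h
          rw [hmxdef, hmydef]; linarith
      apply Metric.hausdorffDist_le_of_mem_dist (by linarith)
      · intro z hz
        simp only [Set.mem_insert_iff, Set.mem_singleton_iff] at hz
        rcases hz with h | h <;> rw [h]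
        · exact ⟨my, Set.mem_insert _ _, by rw [dist_eq_norm]; linarith⟩
        · exact ⟨y₃, Set.mem_insert_of_mem _ rfl, by rw [dist_eq_norm]; linarith⟩
      · intro z hz
        simp only [Set.mem_insert_iff, Set.mem_singleton_iff] at hz
        rcases hz with h | h <;> rw [h]
        · exact ⟨mx, Set.mem_insert _ _, by rw [dist_eq_norm, norm_sub_rev]; linarith⟩
        · exact ⟨x₃, Set.mem_insert_of_mem _ rfl, by rw [dist_eq_norm, norm_sub_rev]; linarith⟩
  · -- big case: 1/6 ≤ r
    apply Metric.hausdorffDist_le_of_mem_dist (by linarith)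
    · intro z hz
      simp only [Set.mem_insert_iff, Set.mem_singleton_iff] at hz
      rcases hz with h | h <;> rw [h]
      · rcases hx1 with h | h | h
        · refine ⟨my, Set.mem_insert _ _, ?_⟩
          rw [dist_eq_norm]
          linarith [tri mx x₁ my, tri x₁ y₁ my, sym y₁ my]
        · refine ⟨my, Set.mem_insert _ _, ?_⟩
          rw [dist_eq_norm]
          linarith [tri mx x₁ my, tri x₁ y₂ my, sym y₂ my]
        · refine ⟨y₃, Set.mem_insert_of_mem _ rfl, ?_⟩
          rw [dist_eq_norm]
          linarith [tri mx x₁ y₃]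
      · rcases hx3 with h | h | h
        · refine ⟨my, Set.mem_insert _ _, ?_⟩
          rw [dist_eq_norm]
          linarith [tri x₃ y₁ my, sym y₁ my]
        · refine ⟨my, Set.mem_insert _ _, ?_⟩
          rw [dist_eq_norm]
          linarith [tri x₃ y₂ my, sym y₂ my]
        · exact ⟨y₃, Set.mem_insert_of_mem _ rfl, by rw [dist_eq_norm]; linarith⟩
    · intro z hz
      simp only [Set.mem_insert_iff, Set.mem_singleton_iff] at hz
      rcases hz with h | h <;> rw [h]
      · rcases hy1 with h | h | h
        · refine ⟨mx, Set.mem_insert _ _, ?_⟩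
          rw [dist_eq_norm]
          linarith [tri my y₁ mx, tri y₁ x₁ mx, sym x₁ mx]
        · refine ⟨mx, Set.mem_insert _ _, ?_⟩
          rw [dist_eq_norm]
          linarith [tri my y₁ mx, tri y₁ x₂ mx, sym x₂ mx]
        · refine ⟨x₃, Set.mem_insert_of_mem _ rfl, ?_⟩
          rw [dist_eq_norm]
          linarith [tri my y₁ x₃]
      · rcases hy3 with h | h | h
        · refine ⟨mx, Set.mem_insert _ _, ?_⟩
          rw [dist_eq_norm]
          linarith [tri y₃ x₁ mx, sym x₁ mx]
        · refine ⟨mx, Set.mem_insert _ _, ?_⟩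
          rw [dist_eq_norm]
          linarith [tri y₃ x₂ mx, sym x₂ mx]
        · exact ⟨x₃, Set.mem_insert_of_mem _ rfl, by rw [dist_eq_norm]; linarith⟩
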